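/- Let δ1, δ2 be complex numbers and ω > 0 a real number. There exist real numbers τ1 ≥ 0 and τ2 ≥ 0 such that 1 + δ1·e^{−iωτ1} + δ2·e^{−iωτ2} = 0 if and only if |δ1| + |δ2| ≥ 1 and −1 ≤ |δ1| − |δ2| ≤ 1. -/

import Mathlib

open Complex

lemma exp_neg_surj (ω : ℝ) (hω : 0 < ω) (z : ℂ) (hz : ‖z‖ = 1) :
    ∃ τ : ℝ, 0 ≤ τ ∧ Complex.exp (-(I * (ω : ℂ) * (τ : ℂ))) = z := by
  refine ⟨(2 * Real.pi - z.arg) / ω, ?_, ?_⟩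
  · apply div_nonneg _ hω.le
    have h1 := Complex.arg_le_pi z
    have h2 := Real.pi_pos
    linarith
  · have hτ : (I * (ω : ℂ) * (((2 * Real.pi - z.arg) / ω : ℝ) : ℂ))
        = ((2 * Real.pi - z.arg : ℝ) : ℂ) * I := by
      have : ((ω : ℂ)) ≠ 0 := by exact_mod_cast hω.ne'
      push_cast
      field_simp
    rw [hτ]
    have : (-(((2 * Real.pi - z.arg : ℝ) : ℂ) * I)) = z.arg * I - 2 * Real.pi * I := by
      push_cast; ring
    rw [this, Complex.exp_sub]
    have h2pi : Complex.exp (2 * Real.pi * I) = 1 := Complex.exp_two_pi_mul_I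
    rw [h2pi, div_one]
    have := Complex.norm_mul_exp_arg_mul_I z
    rw [hz] at this
    simpa using this

lemma exists_unit_triangle (r1 r2 : ℝ) (h0 : 0 ≤ r1) (h1 : 1 ≤ r1 + r2)
    (h2 : -1 ≤ r1 - r2) (h3 : r1 - r2 ≤ 1) :
    ∃ u1 u2 : ℂ, ‖u1‖ = r1 ∧ ‖u2‖ = r2 ∧ 1 + u1 + u2 = 0 := by
  set g : ℝ → ℝ := fun t => ‖1 + (r1 : ℂ) * Complex.exp ((t : ℂ) * I)‖ with hg_def
  have hg : Continuous g := by
    apply continuous_norm.comp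
    continuity
  have hg0 : g 0 = 1 + r1 := by
    simp only [hg_def, Complex.ofReal_zero, zero_mul, Complex.exp_zero, mul_one]
    rw [show (1 + (r1 : ℂ)) = (((1 + r1 : ℝ)) : ℂ) by push_cast; ring, Complex.norm_real, Real.norm_eq_abs]
    exact abs_of_nonneg (by linarith)
  have hgpi : g Real.pi = |1 - r1| := by
    simp only [hg_def]
    rw [show ((Real.pi : ℝ) : ℂ) * I = Real.pi * I from rfl, Complex.exp_pi_mul_I]
    rw [show (1 + (r1 : ℂ) * (-1)) = (((1 - r1 : ℝ)) : ℂ) by push_cast; ring, Complex.norm_real, Real.norm_eq_abs]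
  have hmem : r2 ∈ Set.Icc (g Real.pi) (g 0) := by
    rw [hg0, hgpi]
    exact ⟨abs_le.2 ⟨by linarith, by linarith⟩, by linarith⟩
  have := intermediate_value_Icc' (le_of_lt Real.pi_pos) hg.continuousOn hmem
  obtain ⟨t, _, ht⟩ := this
  refine ⟨(r1 : ℂ) * Complex.exp ((t : ℂ) * I), -(1 + (r1 : ℂ) * Complex.exp ((t : ℂ) * I)), ?_, ?_, by ring⟩
  · rw [norm_mul, Complex.norm_exp_ofReal_mul_I, Complex.norm_real, Real.norm_eq_abs, _root_.abs_of_nonneg h0, mul_one]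
  · rw [norm_neg]
    exact ht



open Complex in
/-- For `ω > 0`, there exist delays `τ1, τ2 ≥ 0` with
`1 + δ1·e^{−iωτ1} + δ2·e^{−iωτ2} = 0` if and only if the triangle conditions
`|δ1| + |δ2| ≥ 1` and `−1 ≤ |δ1| − |δ2| ≤ 1` hold. -/
theorem crossing_set_characterization
    (δ1 δ2 : ℂ) (ω : ℝ) (hω : 0 < ω) :
    (∃ τ1 τ2 : ℝ, 0 ≤ τ1 ∧ 0 ≤ τ2 ∧
      1 + δ1 * Complex.exp (-(I * (ω : ℂ) * (τ1 : ℂ)))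
        + δ2 * Complex.exp (-(I * (ω : ℂ) * (τ2 : ℂ))) = 0)
    ↔
    (1 ≤ ‖δ1‖ + ‖δ2‖ ∧
     -1 ≤ ‖δ1‖ - ‖δ2‖ ∧
     ‖δ1‖ - ‖δ2‖ ≤ 1) := by
  constructor
  · rintro ⟨τ1, τ2, hτ1, hτ2, heq⟩
    set E1 := Complex.exp (-(I * (ω : ℂ) * (τ1 : ℂ))) with hE1
    set E2 := Complex.exp (-(I * (ω : ℂ) * (τ2 : ℂ))) with hE2
    have habs : ∀ τ : ℝ, ‖Complex.exp (-(I * (ω : ℂ) * (τ : ℂ)))‖ = 1 := by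
      intro τ
      rw [Complex.norm_exp]
      norm_num [Complex.mul_re]
    have hA1 : ‖δ1 * E1‖ = ‖δ1‖ := by
      rw [norm_mul, hE1, habs, mul_one]
    have hA2 : ‖δ2 * E2‖ = ‖δ2‖ := by
      rw [norm_mul, hE2, habs, mul_one]
    have hsum : δ1 * E1 + δ2 * E2 = -1 := by linear_combination heq
    refine ⟨?_, ?_, ?_⟩
    · have : ‖δ1 * E1 + δ2 * E2‖ = 1 := by rw [hsum]; simp
      calc (1:ℝ) = ‖δ1 * E1 + δ2 * E2‖ := this.symm
        _ ≤ ‖δ1 * E1‖ + ‖δ2 * E2‖ := norm_add_le _ _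
        _ = ‖δ1‖ + ‖δ2‖ := by rw [hA1, hA2]
    · have h : δ2 * E2 = -1 - δ1 * E1 := by linear_combination heq
      have : ‖δ2 * E2‖ ≤ 1 + ‖δ1 * E1‖ := by
        rw [h]
        calc ‖-1 - δ1 * E1‖ ≤ ‖(-1 : ℂ)‖ + ‖δ1 * E1‖ :=
          norm_sub_le _ _
        _ = 1 + ‖δ1 * E1‖ := by norm_num
      rw [hA1, hA2] at this; linarith
    · have h : δ1 * E1 = -1 - δ2 * E2 := by linear_combination heq
      have : ‖δ1 * E1‖ ≤ 1 + ‖δ2 * E2‖ := by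
        rw [h]
        calc ‖-1 - δ2 * E2‖ ≤ ‖(-1 : ℂ)‖ + ‖δ2 * E2‖ :=
          norm_sub_le _ _
        _ = 1 + ‖δ2 * E2‖ := by norm_num
      rw [hA1, hA2] at this; linarith
  · rintro ⟨h1, h2, h3⟩
    obtain ⟨u1, u2, hu1, hu2, hsum⟩ :=
      exists_unit_triangle (‖δ1‖) (‖δ2‖) (norm_nonneg _)
        h1 h2 h3
    have step : ∀ (δ : ℂ) (u : ℂ), ‖u‖ = ‖δ‖ →
        ∃ τ : ℝ, 0 ≤ τ ∧ δ * Complex.exp (-(I * (ω : ℂ) * (τ : ℂ))) = u := by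
      intro δ u hu
      by_cases hδ : δ = 0
      · refine ⟨0, le_refl _, ?_⟩
        have : u = 0 := by
          have : ‖u‖ = 0 := by rw [hu, hδ, norm_zero]
          exact norm_eq_zero.mp this
        rw [hδ, this, zero_mul]
      · have hz : ‖u / δ‖ = 1 := by
          rw [norm_div, hu, div_self (norm_ne_zero_iff.mpr hδ)]
        obtain ⟨τ, hτ, hexp⟩ := exp_neg_surj ω hω (u / δ) hz
        exact ⟨τ, hτ, by rw [hexp, mul_div_cancel₀ _ hδ]⟩
    obtain ⟨τ1, hτ1, he1⟩ := step δ1 u1 (by rw [hu1])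
    obtain ⟨τ2, hτ2, he2⟩ := step δ2 u2 (by rw [hu2])
    exact ⟨τ1, τ2, hτ1, hτ2, by rw [he1, he2]; exact hsum⟩
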